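/- Let A be a commutative ring, f_1, …, f_r elements of A, and e_1, …, e_r positive integers. Then f_1, …, f_r is a regular sequence on A if and only if f_1^{e_1}, …, f_r^{e_r} is a regular sequence on A. -/

import Mathlib

open scoped BigOperators

/-- A δ-structure on a commutative `ℤ_(p)`-algebra `A`: a map `δ : A → A` with
`δ(0) = δ(1) = 0`, `δ(a+b) = δ a + δ b + (a^p + b^p - (a+b)^p)/p` (expressed via binomial
coefficients divided by the prime `p`), and
`δ(ab) = a^p δ b + b^p δ a + p δ a δ b`.  The field `isUnit_of_not_dvd` expresses that `A`
is a `ℤ_(p)`-algebra. -/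
structure DeltaStructure (A : Type) [CommRing A] (p : ℕ) : Type where
  δ : A → A
  delta_zero : δ 0 = 0
  delta_one : δ 1 = 0
  delta_add : ∀ a b : A, δ (a + b) = δ a + δ b -
      ∑ i ∈ Finset.Ioo 0 p, (((p.choose i) / p : ℕ) : A) * a ^ i * b ^ (p - i)
  delta_mul : ∀ a b : A, δ (a * b) =
      a ^ p * δ b + b ^ p * δ a + (p : A) * δ a * δ b
  isUnit_of_not_dvd : ∀ n : ℤ, ¬ ((p : ℤ) ∣ n) → IsUnit ((n : A))

/-- The Frobenius lift `φ(a) = a^p + p·δ(a)` associated to a δ-structure. -/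
def DeltaStructure.phi {A : Type} [CommRing A] {p : ℕ} (D : DeltaStructure A p) (a : A) : A :=
  a ^ p + (p : A) * D.δ a

/-- An `A`-module `M` is derived `f`-complete iff the map `(xₙ) ↦ (xₙ - f·xₙ₊₁)` on `M^ℕ`
is bijective (equivalently, `Hom(A[1/f], M) = Ext¹(A[1/f], M) = 0`). -/
def DerivedFComplete {A : Type} [CommRing A] (f : A) (M : Type) [AddCommGroup M]
    [Module A M] : Prop :=
  Function.Bijective (fun x : ℕ → M => fun n => x n - f • x (n + 1))



open Pointwise

variable {R : Type*} {M : Type*} [CommRing R] [AddCommGroup M] [Module R M]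

lemma mem_smul_top_iff (r : R) (m : M) :
    m ∈ r • (⊤ : Submodule R M) ↔ ∃ u, r • u = m := by
  constructor
  · intro h
    rcases Set.mem_smul_set.mp h with ⟨u, -, hu⟩
    exact ⟨u, hu⟩
  · rintro ⟨u, rfl⟩
    exact Submodule.smul_mem_pointwise_smul u r ⊤ trivial

lemma take_succ_smul (rs : List R) (j : ℕ) (h : j < rs.length) :
    (Ideal.ofList (rs.take (j+1)) • ⊤ : Submodule R M) =
      Ideal.ofList (rs.take j) • ⊤ ⊔ rs[j] • ⊤ := by
  rw [← List.take_concat_get' rs j h, Ideal.ofList_append, Submodule.sup_smul,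
    Ideal.ofList_singleton, Submodule.ideal_span_singleton_smul]

lemma claimD (x : R) (e : ℕ) (hx : IsSMulRegular M x) (rs : List R)
    (hwr : ∀ i (h : i < rs.length) (m : M),
      rs[i] • m ∈ x ^ e • ⊤ ⊔ (Ideal.ofList (rs.take i) • ⊤ : Submodule R M) →
        m ∈ x ^ e • ⊤ ⊔ (Ideal.ofList (rs.take i) • ⊤ : Submodule R M)) :
    ∀ j, j ≤ rs.length → ∀ m : M,
      x ^ e • m ∈ (Ideal.ofList (rs.take j) • ⊤ : Submodule R M) →
        m ∈ x • ⊤ ⊔ (Ideal.ofList (rs.take j) • ⊤ : Submodule R M) := by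
  intro j
  induction j with
  | zero =>
    intro _ m hm
    simp only [List.take_zero, Ideal.ofList_nil, Submodule.bot_smul,
      Submodule.mem_bot] at hm
    have : m = 0 := (hx.pow e) (by simpa using hm)
    simp [this]
  | succ j ih =>
    intro hj m hm
    have hjlt : j < rs.length := hj
    rw [take_succ_smul rs j hjlt] at hm
    rcases Submodule.mem_sup.mp hm with ⟨n, hn, z, hz, hsum⟩
    rcases (mem_smul_top_iff _ _).mp hz with ⟨c, rfl⟩
    -- rs[j] • c ∈ x^e•⊤ ⊔ J(take j)
    have hc : rs[j] • c ∈ x ^ e • ⊤ ⊔ (Ideal.ofList (rs.take j) • ⊤ : Submodule R M) := by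
      have : rs[j] • c = x ^ e • m - n := by rw [← hsum]; abel
      rw [this]
      exact Submodule.sub_mem _
        (Submodule.mem_sup_left (Submodule.smul_mem_pointwise_smul m _ ⊤ trivial))
        (Submodule.mem_sup_right hn)
    rcases Submodule.mem_sup.mp (hwr j hjlt c hc) with ⟨z', hz', c', hc', hsum'⟩
    rcases (mem_smul_top_iff _ _).mp hz' with ⟨d, rfl⟩
    -- x^e • (m - rs[j] • d) ∈ J(take j)
    have hkey : x ^ e • (m - rs[j] • d)
        ∈ (Ideal.ofList (rs.take j) • ⊤ : Submodule R M) := by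
      have heq : x ^ e • (m - rs[j] • d) = n + rs[j] • c' := by
        have h1 : x ^ e • m = n + rs[j] • c := hsum.symm
        have h2 : c = x ^ e • d + c' := hsum'.symm
        rw [smul_sub, h1, h2, smul_add, smul_comm (rs[j]) (x ^ e) d]
        abel
      rw [heq]
      exact Submodule.add_mem _ hn (Submodule.smul_mem _ _ hc')
    have := ih (le_of_lt hjlt) _ hkey
    rw [take_succ_smul rs j hjlt, ← sup_assoc]
    have hmd : m = (m - rs[j] • d) + rs[j] • d := by abel
    rw [hmd]
    exact Submodule.add_mem _ (Submodule.mem_sup_left this)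
      (Submodule.mem_sup_right ((mem_smul_top_iff _ _).mpr ⟨d, rfl⟩))

open Pointwise

variable {R : Type*} {M : Type*} [CommRing R] [AddCommGroup M] [Module R M]

lemma backwardStep (x : R) (e' : ℕ) (hx : IsSMulRegular M x) (rs : List R)
    (hwr : ∀ i (h : i < rs.length) (m : M),
      rs[i] • m ∈ x ^ (e'+1) • ⊤ ⊔ (Ideal.ofList (rs.take i) • ⊤ : Submodule R M) →
        m ∈ x ^ (e'+1) • ⊤ ⊔ (Ideal.ofList (rs.take i) • ⊤ : Submodule R M)) :
    ∀ i (h : i < rs.length) (m : M),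
      rs[i] • m ∈ x • ⊤ ⊔ (Ideal.ofList (rs.take i) • ⊤ : Submodule R M) →
        m ∈ x • ⊤ ⊔ (Ideal.ofList (rs.take i) • ⊤ : Submodule R M) := by
  intro i h m hm
  rcases Submodule.mem_sup.mp hm with ⟨z, hz, n, hn, hsum⟩
  rcases (mem_smul_top_iff _ _).mp hz with ⟨a, rfl⟩
  -- multiply by x^e'
  have h1 : rs[i] • (x ^ e' • m)
      ∈ x ^ (e'+1) • ⊤ ⊔ (Ideal.ofList (rs.take i) • ⊤ : Submodule R M) := by
    have heq : rs[i] • (x ^ e' • m) = x ^ (e'+1) • a + x ^ e' • n := by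
      rw [smul_comm, ← hsum, smul_add, smul_smul, ← pow_succ]
    rw [heq]
    exact Submodule.add_mem _
      (Submodule.mem_sup_left (Submodule.smul_mem_pointwise_smul a _ ⊤ trivial))
      (Submodule.mem_sup_right (Submodule.smul_mem _ _ hn))
  rcases Submodule.mem_sup.mp (hwr i h _ h1) with ⟨z', hz', n', hn', hsum'⟩
  rcases (mem_smul_top_iff _ _).mp hz' with ⟨u, rfl⟩
  -- x^(e'+1) • (m - x • u) = x • n' ∈ J
  have h2 : x ^ (e'+1) • (m - x • u)
      ∈ (Ideal.ofList (rs.take i) • ⊤ : Submodule R M) := by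
    have heq : x ^ (e'+1) • (m - x • u) = x • n' := by
      have h6 : x ^ e' • m = x ^ (e'+1) • u + n' := hsum'.symm
      have h4 : x ^ (e'+1) • m = x • (x ^ e' • m) := by rw [smul_smul, ← pow_succ']
      have h5 : x ^ (e'+1) • (x • u) = x • (x ^ (e'+1) • u) := by
        rw [smul_smul, smul_smul]; congr 1; ring
      rw [smul_sub, h4, h5, h6, smul_add]
      abel
    rw [heq]
    exact Submodule.smul_mem _ _ hn'
  have h3 := claimD x (e'+1) hx rs hwr i (le_of_lt h) _ h2
  have hmu : m = (m - x • u) + x • u := by abel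
  rw [hmu]
  exact Submodule.add_mem _ h3
    (Submodule.mem_sup_left ((mem_smul_top_iff _ _).mpr ⟨u, rfl⟩))

lemma forwardStep (x : R) (rs : List R) (hx : IsSMulRegular M x)
    (h1 : ∀ i (h : i < rs.length) (m : M),
      rs[i] • m ∈ x • ⊤ ⊔ (Ideal.ofList (rs.take i) • ⊤ : Submodule R M) →
        m ∈ x • ⊤ ⊔ (Ideal.ofList (rs.take i) • ⊤ : Submodule R M)) :
    ∀ e, 0 < e → ∀ i (h : i < rs.length) (m : M),
      rs[i] • m ∈ x ^ e • ⊤ ⊔ (Ideal.ofList (rs.take i) • ⊤ : Submodule R M) →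
        m ∈ x ^ e • ⊤ ⊔ (Ideal.ofList (rs.take i) • ⊤ : Submodule R M) := by
  intro e
  induction e with
  | zero => exact fun h => absurd h (lt_irrefl 0)
  | succ e ih =>
    intro _ i h m hm
    rcases Nat.eq_zero_or_pos e with rfl | he
    · simp only [zero_add, pow_one] at hm ⊢
      exact h1 i h m hm
    rcases Submodule.mem_sup.mp hm with ⟨z, hz, n, hn, hsum⟩
    rcases (mem_smul_top_iff _ _).mp hz with ⟨a, rfl⟩
    have step1 : rs[i] • m ∈ x ^ e • ⊤ ⊔ (Ideal.ofList (rs.take i) • ⊤ : Submodule R M) := by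
      rw [← hsum]
      refine Submodule.add_mem _ (Submodule.mem_sup_left ?_) (Submodule.mem_sup_right hn)
      have : x ^ (e+1) • a = x ^ e • (x • a) := by rw [smul_smul, ← pow_succ]
      rw [this]
      exact Submodule.smul_mem_pointwise_smul _ _ ⊤ trivial
    rcases Submodule.mem_sup.mp (ih he i h m step1) with ⟨z', hz', c, hc, hsum'⟩
    rcases (mem_smul_top_iff _ _).mp hz' with ⟨u, rfl⟩
    have hkey : x ^ e • (rs[i] • u - x • a)
        ∈ (Ideal.ofList (rs.take i) • ⊤ : Submodule R M) := by
      have heq : x ^ e • (rs[i] • u - x • a) = n - rs[i] • c := by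
        have h2 : x ^ e • u + c = m := hsum'
        have h3 : x ^ (e+1) • a + n = rs[i] • m := hsum
        have h4 : x ^ e • (x • a) = x ^ (e+1) • a := by rw [smul_smul, ← pow_succ]
        rw [smul_sub, h4]
        have h5 : rs[i] • m = rs[i] • (x ^ e • u) + rs[i] • c := by
          rw [← smul_add, h2]
        rw [smul_comm (rs[i]) (x ^ e) u] at h5
        have := h3.trans h5
        -- this : x^(e+1)•a + n = x^e•(rs[i]•u) + rs[i]•c
        have : x ^ e • (rs[i] • u) = x ^ (e+1) • a + n - rs[i] • c := by
          rw [this]; abel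
        rw [this]; abel
      rw [heq]
      exact Submodule.sub_mem _ hn (Submodule.smul_mem _ _ hc)
    have hD := claimD x e hx rs (fun i h m hm => ih he i h m hm) i (le_of_lt h) _ hkey
    have hru : rs[i] • u ∈ x • ⊤ ⊔ (Ideal.ofList (rs.take i) • ⊤ : Submodule R M) := by
      have : rs[i] • u = (rs[i] • u - x • a) + x • a := by abel
      rw [this]
      exact Submodule.add_mem _ hD
        (Submodule.mem_sup_left ((mem_smul_top_iff _ _).mpr ⟨a, rfl⟩))
    rcases Submodule.mem_sup.mp (h1 i h u hru) with ⟨w', hw', d, hd, hsum''⟩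
    rcases (mem_smul_top_iff _ _).mp hw' with ⟨w, rfl⟩
    have : m = x ^ (e+1) • w + (x ^ e • d + c) := by
      have : x • w + d = u := hsum''
      rw [← hsum', ← this, smul_add, smul_smul, ← pow_succ]
      abel
    rw [this]
    exact Submodule.add_mem _
      (Submodule.mem_sup_left ((mem_smul_top_iff _ _).mpr ⟨w, rfl⟩))
      (Submodule.mem_sup_right (Submodule.add_mem _ (Submodule.smul_mem _ _ hd) hc))

lemma wr_iff (rs : List R) :
    RingTheory.Sequence.IsWeaklyRegular M rs ↔
      ∀ i (h : i < rs.length) (m : M),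
        rs[i] • m ∈ (Ideal.ofList (rs.take i) • ⊤ : Submodule R M) →
          m ∈ (Ideal.ofList (rs.take i) • ⊤ : Submodule R M) := by
  rw [RingTheory.Sequence.isWeaklyRegular_iff]
  exact forall_congr' fun i => forall_congr' fun h =>
    isSMulRegular_quotient_iff_mem_of_smul_mem _ _

lemma wr_quot_iff (N : Submodule R M) (rs : List R) :
    RingTheory.Sequence.IsWeaklyRegular (M ⧸ N) rs ↔
      ∀ i (h : i < rs.length) (m : M),
        rs[i] • m ∈ N ⊔ (Ideal.ofList (rs.take i) • ⊤ : Submodule R M) →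
          m ∈ N ⊔ (Ideal.ofList (rs.take i) • ⊤ : Submodule R M) := by
  rw [wr_iff]
  refine forall_congr' fun i => forall_congr' fun h => ?_
  have hJ : (Ideal.ofList (rs.take i) • ⊤ : Submodule R (M ⧸ N)) =
      Submodule.map N.mkQ (Ideal.ofList (rs.take i) • ⊤ : Submodule R M) := by
    rw [Submodule.map_smul'', Submodule.map_top, Submodule.range_mkQ]
  have hmem : ∀ z : M, N.mkQ z ∈ (Ideal.ofList (rs.take i) • ⊤ : Submodule R (M ⧸ N)) ↔
      z ∈ N ⊔ (Ideal.ofList (rs.take i) • ⊤ : Submodule R M) := by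
    intro z
    rw [hJ, ← Submodule.comap_map_mkQ]
    exact Iff.rfl
  constructor
  · intro H m hm
    exact (hmem m).mp <| H (N.mkQ m) <| by rw [← map_smul]; exact (hmem _).mpr hm
  · intro H m' hm'
    obtain ⟨m, rfl⟩ := N.mkQ_surjective m'
    rw [← map_smul] at hm'
    exact (hmem m).mpr <| H m <| (hmem _).mp hm'

lemma key_pow (x : R) (e : ℕ) (he : 0 < e) (rs : List R) :
    RingTheory.Sequence.IsWeaklyRegular M (x :: rs) ↔
      RingTheory.Sequence.IsWeaklyRegular M (x ^ e :: rs) := by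
  rw [RingTheory.Sequence.isWeaklyRegular_cons_iff,
    RingTheory.Sequence.isWeaklyRegular_cons_iff]
  show IsSMulRegular M x ∧
      RingTheory.Sequence.IsWeaklyRegular (M ⧸ x • (⊤ : Submodule R M)) rs ↔
    IsSMulRegular M (x ^ e) ∧
      RingTheory.Sequence.IsWeaklyRegular (M ⧸ x ^ e • (⊤ : Submodule R M)) rs
  rw [wr_quot_iff, wr_quot_iff]
  constructor
  · rintro ⟨hx, h2⟩
    exact ⟨hx.pow e, forwardStep x rs hx h2 e he⟩
  · rintro ⟨hxe, h2⟩
    have hx : IsSMulRegular M x := (IsSMulRegular.pow_iff he).mp hxe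
    obtain ⟨e', rfl⟩ : ∃ e', e = e' + 1 := ⟨e - 1, (Nat.succ_pred_eq_of_pos he).symm⟩
    exact ⟨hx, backwardStep x e' hx rs h2⟩

lemma aux_main {A : Type} [CommRing A] (r : ℕ) (f : Fin r → A) (e : Fin r → ℕ)
    (he : ∀ i, 0 < e i) :
    ∀ (M : Type) [AddCommGroup M] [Module A M],
      RingTheory.Sequence.IsWeaklyRegular M (List.ofFn f) ↔
        RingTheory.Sequence.IsWeaklyRegular M (List.ofFn fun i => f i ^ e i) := by
  induction r with
  | zero =>
    intro M _ _
    simp [List.ofFn_zero]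
  | succ r ih =>
    intro M _ _
    rw [List.ofFn_succ, List.ofFn_succ (f := fun i => f i ^ e i),
      RingTheory.Sequence.isWeaklyRegular_cons_iff]
    rw [ih (fun i => f i.succ) (fun i => e i.succ) (fun i => he i.succ)
      (QuotSMulTop (f 0) M)]
    rw [← RingTheory.Sequence.isWeaklyRegular_cons_iff]
    exact key_pow (f 0) (e 0) (he 0) _

theorem statement4 {A : Type} [CommRing A] (r : ℕ) (f : Fin r → A) (e : Fin r → ℕ)
    (he : ∀ i, 0 < e i) :
    RingTheory.Sequence.IsWeaklyRegular A (List.ofFn f) ↔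
      RingTheory.Sequence.IsWeaklyRegular A (List.ofFn fun i => f i ^ e i) :=
  aux_main r f e he A
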